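/- arXiv:2211.17241 — 2 statements merged into one kernel-verified Lean document; each statement's English description precedes it below -/
import Mathlib

section
/- There exist positive constants C₃ and C₄ such that C₃(T* − t)^{−1} ≤ H(y(t)) ≤ C₄(T* − t)^{−1} for all t ∈ [t₀, T*). -/
open Set Real Filter Topology MeasureTheory

noncomputable section

/-- The action of an `n × n` real matrix on `EuclideanSpace ℝ (Fin n)` by
matrix-vector multiplication. -/
def mulVecE {n : ℕ} (A : Matrix (Fin n) (Fin n) ℝ) (x : EuclideanSpace ℝ (Fin n)) :
    EuclideanSpace ℝ (Fin n) :=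
  WithLp.toLp 2 (A.mulVec x)

/-- `mulVecE` as a continuous linear map. -/
def matCLM {n : ℕ} (S : Matrix (Fin n) (Fin n) ℝ) :
    EuclideanSpace ℝ (Fin n) →L[ℝ] EuclideanSpace ℝ (Fin n) :=
  ((EuclideanSpace.equiv (Fin n) ℝ).symm : (Fin n → ℝ) →L[ℝ] EuclideanSpace ℝ (Fin n)).comp
    ((LinearMap.toContinuousLinearMap (Matrix.mulVecLin S)).comp
      ((EuclideanSpace.equiv (Fin n) ℝ) : EuclideanSpace ℝ (Fin n) →L[ℝ] (Fin n → ℝ)))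

lemma matCLM_apply {n : ℕ} (S : Matrix (Fin n) (Fin n) ℝ) (x : EuclideanSpace ℝ (Fin n)) :
    matCLM S x = mulVecE S x := rfl

lemma matCLM_bounds {n : ℕ} (S : Matrix (Fin n) (Fin n) ℝ) (hS : IsUnit S) :
    ∃ c₁ c₂ : ℝ, 0 < c₁ ∧ 0 < c₂ ∧ ∀ x : EuclideanSpace ℝ (Fin n),
      c₁ * ‖x‖ ≤ ‖matCLM S x‖ ∧ ‖matCLM S x‖ ≤ c₂ * ‖x‖ := by
  have hdet : IsUnit S.det := (Matrix.isUnit_iff_isUnit_det S).mp hS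
  have hid : ∀ x : EuclideanSpace ℝ (Fin n), matCLM S⁻¹ (matCLM S x) = x := by
    intro x
    show mulVecE S⁻¹ (mulVecE S x) = x
    show WithLp.toLp 2 (S⁻¹.mulVec (S.mulVec x)) = x
    rw [Matrix.mulVec_mulVec, Matrix.nonsing_inv_mul S hdet, Matrix.one_mulVec]
  refine ⟨(‖matCLM S⁻¹‖ + 1)⁻¹, ‖matCLM S‖ + 1, by positivity, by positivity, fun x => ⟨?_, ?_⟩⟩
  · rw [inv_mul_le_iff₀ (by positivity)]
    calc ‖x‖ = ‖matCLM S⁻¹ (matCLM S x)‖ := by rw [hid]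
      _ ≤ ‖matCLM S⁻¹‖ * ‖matCLM S x‖ := (matCLM S⁻¹).le_opNorm _
      _ ≤ (‖matCLM S⁻¹‖ + 1) * ‖matCLM S x‖ :=
          mul_le_mul_of_nonneg_right (by linarith) (norm_nonneg _)
  · calc ‖matCLM S x‖ ≤ ‖matCLM S‖ * ‖x‖ := (matCLM S).le_opNorm _
      _ ≤ (‖matCLM S‖ + 1) * ‖x‖ := mul_le_mul_of_nonneg_right (by linarith) (norm_nonneg _)

lemma inner_mulVecE_diag {n : ℕ} (D : Matrix (Fin n) (Fin n) ℝ) (hD : D.IsDiag)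
    (u : EuclideanSpace ℝ (Fin n)) :
    (inner ℝ u (mulVecE D u) : ℝ) = ∑ i, D i i * (u i * u i) := by
  rw [PiLp.inner_apply]
  refine Finset.sum_congr rfl fun i _ => ?_
  have : mulVecE D u i = D i i * u i := by
    show (D.mulVec u) i = D i i * u i
    rw [Matrix.mulVec, dotProduct]
    rw [Finset.sum_eq_single i (fun j _ hj => by rw [hD (Ne.symm hj)]; ring) (by simp)]
  rw [this, RCLike.inner_apply]
  simp; ring

lemma norm_sq_eq' {n : ℕ} (u : EuclideanSpace ℝ (Fin n)) : ‖u‖ ^ 2 = ∑ i, u i * u i := by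
  rw [← real_inner_self_eq_norm_sq, PiLp.inner_apply]
  simp [RCLike.inner_apply, sq]

lemma inner_mulVecE_diag_bounds {n : ℕ} (D : Matrix (Fin n) (Fin n) ℝ) (hD : D.IsDiag)
    {lam Lam : ℝ} (hl : ∀ i, lam ≤ D i i) (hL : ∀ i, D i i ≤ Lam)
    (u : EuclideanSpace ℝ (Fin n)) :
    lam * ‖u‖ ^ 2 ≤ (inner ℝ u (mulVecE D u) : ℝ) ∧
      (inner ℝ u (mulVecE D u) : ℝ) ≤ Lam * ‖u‖ ^ 2 := by
  rw [inner_mulVecE_diag D hD, norm_sq_eq', Finset.mul_sum, Finset.mul_sum]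
  constructor
  · exact Finset.sum_le_sum fun i _ => mul_le_mul_of_nonneg_right (hl i) (mul_self_nonneg _)
  · exact Finset.sum_le_sum fun i _ => mul_le_mul_of_nonneg_right (hL i) (mul_self_nonneg _)

lemma sphere_bounds {n : ℕ} (hn : 1 ≤ n) (H : EuclideanSpace ℝ (Fin n) → ℝ)
    (hHpos : ∀ x : EuclideanSpace ℝ (Fin n), ‖x‖ = 1 → 0 < H x)
    (hHcont : ContinuousOn H (Metric.sphere (0 : EuclideanSpace ℝ (Fin n)) 1)) :
    ∃ h₁ h₂ : ℝ, 0 < h₁ ∧ 0 < h₂ ∧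
      ∀ x : EuclideanSpace ℝ (Fin n), ‖x‖ = 1 → h₁ ≤ H x ∧ H x ≤ h₂ := by
  have hx0 : (EuclideanSpace.single (⟨0, hn⟩ : Fin n) (1:ℝ)) ∈
      Metric.sphere (0 : EuclideanSpace ℝ (Fin n)) 1 := by
    simp [EuclideanSpace.norm_single]
  have hne : (Metric.sphere (0 : EuclideanSpace ℝ (Fin n)) 1).Nonempty := ⟨_, hx0⟩
  obtain ⟨a, ha, hamin⟩ :=
    (isCompact_sphere (0 : EuclideanSpace ℝ (Fin n)) 1).exists_isMinOn hne hHcont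
  obtain ⟨c, hcmem, hcmax⟩ :=
    (isCompact_sphere (0 : EuclideanSpace ℝ (Fin n)) 1).exists_isMaxOn hne hHcont
  have hHa : 0 < H a := hHpos a (by simpa using ha)
  refine ⟨H a, H c, hHa, lt_of_lt_of_le hHa (hamin hcmem), fun x hx => ⟨?_, ?_⟩⟩
  · exact hamin (by simpa using hx)
  · exact hcmax (by simpa using hx)

set_option maxHeartbeats 2000000 in
theorem H_of_solution_two_sided_rate (n : ℕ) (hn : 1 ≤ n)
    (α δ M t₀ T' : ℝ) (hα : 0 < α) (hδ : 0 < δ) (hM : 0 < M)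
    (ht₀ : 0 ≤ t₀) (hT' : t₀ < T')
    (A : Matrix (Fin n) (Fin n) ℝ)
    (hA : ∃ S D : Matrix (Fin n) (Fin n) ℝ, IsUnit S ∧ D.IsDiag ∧
      (∀ i, 0 < D i i) ∧ A = S⁻¹ * D * S)
    (H : EuclideanSpace ℝ (Fin n) → ℝ)
    (hHhom : ∀ x : EuclideanSpace ℝ (Fin n), x ≠ 0 → ∀ s : ℝ, 0 < s →
      H (s • x) = s ^ (-α) * H x)
    (hHpos : ∀ x : EuclideanSpace ℝ (Fin n), ‖x‖ = 1 → 0 < H x)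
    (hHcont : ContinuousOn H (Metric.sphere (0 : EuclideanSpace ℝ (Fin n)) 1))
    (y f : ℝ → EuclideanSpace ℝ (Fin n))
    (hycont : ContinuousOn y (Ico t₀ T'))
    (hyne : ∀ t ∈ Ico t₀ T', y t ≠ 0)
    (hylim : Tendsto y (𝓝[<] T') (𝓝 0))
    (hode : ∀ t ∈ Ioo t₀ T', HasDerivAt y (-(H (y t)) • mulVecE A (y t) + f t) t)
    (hfcont : ContinuousOn f (Ico t₀ T'))
    (hfb : ∀ t ∈ Ico t₀ T', ‖f t‖ ≤ M * ‖y t‖ ^ (1 - α + δ))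
    :
    ∃ C₃ C₄ : ℝ, 0 < C₃ ∧ 0 < C₄ ∧
      ∀ t ∈ Ico t₀ T',
        C₃ * (T' - t)⁻¹ ≤ H (y t) ∧ H (y t) ≤ C₄ * (T' - t)⁻¹ := by
  obtain ⟨S, D, hSu, hDdiag, hDpos, hAeq⟩ := hA
  obtain ⟨h₁, h₂, hh₁, hh₂, hsb⟩ := sphere_bounds hn H hHpos hHcont
  obtain ⟨c₁, c₂, hc₁, hc₂, hc⟩ := matCLM_bounds S hSu
  haveI : Nonempty (Fin n) := ⟨⟨0, hn⟩⟩
  set N : ℝ → ℝ := fun t => ‖matCLM S (y t)‖ with hNdef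
  have hNpos : ∀ t ∈ Ico t₀ T', 0 < N t := fun t ht =>
    lt_of_lt_of_le (mul_pos hc₁ (norm_pos_iff.mpr (hyne t ht))) (hc (y t)).1
  -- bound for H (y t) in terms of N
  have hHN : ∀ t ∈ Ico t₀ T',
      h₁ * c₁ ^ α * (N t) ^ (-α) ≤ H (y t) ∧
        H (y t) ≤ h₂ * c₂ ^ α * (N t) ^ (-α) := by
    intro t ht
    have hy0 : y t ≠ 0 := hyne t ht
    have hny : (0:ℝ) < ‖y t‖ := norm_pos_iff.mpr hy0
    have hNt : 0 < N t := hNpos t ht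
    -- homogeneity
    have hunit : ‖(‖y t‖⁻¹ • y t : EuclideanSpace ℝ (Fin n))‖ = 1 := by
      rw [norm_smul, norm_inv, norm_norm, inv_mul_cancel₀ (ne_of_gt hny)]
    have hhom : H (y t) = ‖y t‖ ^ (-α) * H (‖y t‖⁻¹ • y t) := by
      have h := hHhom (‖y t‖⁻¹ • y t) (smul_ne_zero (inv_ne_zero (ne_of_gt hny)) hy0)
        ‖y t‖ hny
      rwa [smul_inv_smul₀ (ne_of_gt hny)] at h
    obtain ⟨hs1, hs2⟩ := hsb _ hunit
    have hypow : 0 < ‖y t‖ ^ (-α) := Real.rpow_pos_of_pos hny _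
    -- relation between ‖y t‖ ^ (-α) and (N t) ^ (-α)
    have hrel1 : c₁ ^ α * (N t) ^ (-α) ≤ ‖y t‖ ^ (-α) := by
      have h1 : (N t) ^ (-α) ≤ (c₁ * ‖y t‖) ^ (-α) :=
        Real.rpow_le_rpow_of_nonpos (by positivity) (hc (y t)).1 (by linarith)
      have h2 : (c₁ * ‖y t‖) ^ (-α) = c₁ ^ (-α) * ‖y t‖ ^ (-α) :=
        Real.mul_rpow (le_of_lt hc₁) (norm_nonneg _)
      have h3 : c₁ ^ α * (c₁ ^ (-α) * ‖y t‖ ^ (-α)) = ‖y t‖ ^ (-α) := by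
        rw [← mul_assoc, ← Real.rpow_add hc₁]
        simp
      calc c₁ ^ α * (N t) ^ (-α) ≤ c₁ ^ α * ((c₁ * ‖y t‖) ^ (-α)) :=
            mul_le_mul_of_nonneg_left h1 (le_of_lt (Real.rpow_pos_of_pos hc₁ α))
        _ = ‖y t‖ ^ (-α) := by rw [h2, h3]
    have hrel2 : ‖y t‖ ^ (-α) ≤ c₂ ^ α * (N t) ^ (-α) := by
      have h1 : (c₂ * ‖y t‖) ^ (-α) ≤ (N t) ^ (-α) :=
        Real.rpow_le_rpow_of_nonpos hNt (hc (y t)).2 (by linarith)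
      have h2 : (c₂ * ‖y t‖) ^ (-α) = c₂ ^ (-α) * ‖y t‖ ^ (-α) :=
        Real.mul_rpow (le_of_lt hc₂) (norm_nonneg _)
      have h3 : c₂ ^ α * (c₂ ^ (-α) * ‖y t‖ ^ (-α)) = ‖y t‖ ^ (-α) := by
        rw [← mul_assoc, ← Real.rpow_add hc₂]
        simp
      calc ‖y t‖ ^ (-α) = c₂ ^ α * ((c₂ * ‖y t‖) ^ (-α)) := by rw [h2, h3]
        _ ≤ c₂ ^ α * (N t) ^ (-α) :=
            mul_le_mul_of_nonneg_left h1 (le_of_lt (Real.rpow_pos_of_pos hc₂ α))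
    constructor
    · calc h₁ * c₁ ^ α * (N t) ^ (-α) = h₁ * (c₁ ^ α * (N t) ^ (-α)) := by ring
        _ ≤ h₁ * ‖y t‖ ^ (-α) := mul_le_mul_of_nonneg_left hrel1 (le_of_lt hh₁)
        _ = ‖y t‖ ^ (-α) * h₁ := by ring
        _ ≤ ‖y t‖ ^ (-α) * H (‖y t‖⁻¹ • y t) := mul_le_mul_of_nonneg_left hs1 (le_of_lt hypow)
        _ = H (y t) := hhom.symm
    · calc H (y t) = ‖y t‖ ^ (-α) * H (‖y t‖⁻¹ • y t) := hhom
        _ ≤ ‖y t‖ ^ (-α) * h₂ := mul_le_mul_of_nonneg_left hs2 (le_of_lt hypow)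
        _ ≤ (c₂ ^ α * (N t) ^ (-α)) * h₂ := mul_le_mul_of_nonneg_right hrel2 (le_of_lt hh₂)
        _ = h₂ * c₂ ^ α * (N t) ^ (-α) := by ring
  -- main bound on N ^ α
  have hNb : ∃ K₁ K₂ : ℝ, 0 < K₁ ∧ 0 < K₂ ∧ ∀ t ∈ Ico t₀ T',
      K₁ * (T' - t) ≤ (N t) ^ α ∧ (N t) ^ α ≤ K₂ * (T' - t) := by
    -- eigenvalue bounds
    set lam := Finset.univ.inf' Finset.univ_nonempty (fun i => D i i) with hlamdef
    set Lam := Finset.univ.sup' Finset.univ_nonempty (fun i => D i i) with hLamdef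
    have hlam_le : ∀ i, lam ≤ D i i := fun i => Finset.inf'_le _ (Finset.mem_univ i)
    have hLam_ge : ∀ i, D i i ≤ Lam := fun i => Finset.le_sup' (fun j => D j j) (Finset.mem_univ i)
    have hlam : 0 < lam := by
      rw [hlamdef, Finset.lt_inf'_iff]
      exact fun i _ => hDpos i
    have hLam : 0 < Lam := lt_of_lt_of_le hlam (le_trans (hlam_le (Classical.arbitrary _))
      (hLam_ge (Classical.arbitrary _)))
    -- structural constants
    set b : ℝ := h₁ * c₁ ^ α * lam with hbdef
    set B : ℝ := h₂ * c₂ ^ α * Lam with hBdef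
    have hb : 0 < b := by
      have := Real.rpow_pos_of_pos hc₁ α; positivity
    have hB : 0 < B := by
      have := Real.rpow_pos_of_pos hc₂ α; positivity
    set Ce : ℝ := max ((1/c₁) ^ (1 - α + δ)) ((1/c₂) ^ (1 - α + δ)) with hCedef
    have hCe : 0 < Ce := lt_max_of_lt_left (Real.rpow_pos_of_pos (by positivity) _)
    set Cf : ℝ := c₂ * M * Ce with hCfdef
    have hCf : 0 < Cf := by positivity
    -- the pointwise derivative estimate
    have key : ∀ t ∈ Ioo t₀ T', ∃ d : ℝ,
        HasDerivAt (fun s => (N s) ^ α) d t ∧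
        d ≤ α * (-b + Cf * (N t) ^ δ) ∧ α * (-B - Cf * (N t) ^ δ) ≤ d := by
      intro t ht
      have hty : t ∈ Ico t₀ T' := ⟨le_of_lt ht.1, ht.2⟩
      have hNt : 0 < N t := hNpos t hty
      have hder := hode t ht
      set u : EuclideanSpace ℝ (Fin n) := matCLM S (y t) with hudef
      set v : EuclideanSpace ℝ (Fin n) := -(H (y t)) • mulVecE A (y t) + f t with hvdef
      have hNu : N t = ‖u‖ := rfl
      have hu : HasDerivAt (fun s => matCLM S (y s)) (matCLM S v) t :=
        ((matCLM S).hasFDerivAt).comp_hasDerivAt t hder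
      have hSv : matCLM S v = -(H (y t)) • mulVecE D u + matCLM S (f t) := by
        rw [hvdef, map_add, _root_.map_smul]
        congr 2
        show mulVecE S (mulVecE A (y t)) = mulVecE D (mulVecE S (y t))
        show WithLp.toLp 2 (S.mulVec (A.mulVec (y t))) = WithLp.toLp 2 (D.mulVec (S.mulVec (y t)))
        rw [Matrix.mulVec_mulVec, Matrix.mulVec_mulVec, hAeq, ← Matrix.mul_assoc,
          ← Matrix.mul_assoc, Matrix.mul_nonsing_inv S ((Matrix.isUnit_iff_isUnit_det S).mp hSu),
          Matrix.one_mul]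
      have hφ : HasDerivAt (fun s => (inner ℝ (matCLM S (y s)) (matCLM S (y s)) : ℝ))
          ((inner ℝ u (matCLM S v) : ℝ) + (inner ℝ (matCLM S v) u : ℝ)) t := hu.inner ℝ hu
      have hupos : 0 < ‖u‖ := hNu ▸ hNt
      have hinpos : 0 < (inner ℝ u u : ℝ) := by
        rw [real_inner_self_eq_norm_sq]; positivity
      have hψder : HasDerivAt (fun s => ((inner ℝ (matCLM S (y s)) (matCLM S (y s)) : ℝ)) ^ (α/2))
          (((inner ℝ u (matCLM S v) : ℝ) + (inner ℝ (matCLM S v) u : ℝ)) * (α/2) *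
            ((inner ℝ u u : ℝ)) ^ (α/2 - 1)) t :=
        hφ.rpow_const (Or.inl (ne_of_gt hinpos))
      have hexp2 : ((2:ℕ):ℝ) * (α/2) = α := by push_cast; ring
      have hfun : (fun s => ((inner ℝ (matCLM S (y s)) (matCLM S (y s)) : ℝ)) ^ (α/2)) =
          fun s => (N s) ^ α := by
        funext s
        rw [real_inner_self_eq_norm_sq, ← Real.rpow_natCast ‖matCLM S (y s)‖ 2,
          ← Real.rpow_mul (norm_nonneg _), hexp2]
      rw [hfun] at hψder
      -- the quadratic form bounds
      obtain ⟨hq1, hq2⟩ := inner_mulVecE_diag_bounds D hDdiag hlam_le hLam_ge u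
      have hq0 : 0 ≤ (inner ℝ u (mulVecE D u) : ℝ) := le_trans (by positivity) hq1
      -- H bounds
      obtain ⟨hH1, hH2⟩ := hHN t hty
      have hH1' : 0 < h₁ * c₁ ^ α * (N t) ^ (-α) := by
        have := Real.rpow_pos_of_pos hc₁ α
        have := Real.rpow_pos_of_pos hNt (-α)
        positivity
      have hHpos' : 0 < H (y t) := lt_of_lt_of_le hH1' hH1
      -- decomposition of the inner product
      have hIw : (inner ℝ u (matCLM S v) : ℝ) =
          -(H (y t)) * (inner ℝ u (mulVecE D u) : ℝ) + (inner ℝ u (matCLM S (f t)) : ℝ) := by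
        rw [hSv, inner_add_right, real_inner_smul_right]
      -- product bounds
      have hprod1 : b * ((N t) ^ (-α) * ‖u‖ ^ 2) ≤ H (y t) * (inner ℝ u (mulVecE D u) : ℝ) := by
        have h := mul_le_mul hH1 hq1 (by positivity) (le_of_lt hHpos')
        calc b * ((N t) ^ (-α) * ‖u‖ ^ 2) = h₁ * c₁ ^ α * (N t) ^ (-α) * (lam * ‖u‖ ^ 2) := by
              rw [hbdef]; ring
          _ ≤ H (y t) * (inner ℝ u (mulVecE D u) : ℝ) := h
      have hprod2 : H (y t) * (inner ℝ u (mulVecE D u) : ℝ) ≤ B * ((N t) ^ (-α) * ‖u‖ ^ 2) := by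
        have h := mul_le_mul hH2 hq2 hq0 (by positivity)
        calc H (y t) * (inner ℝ u (mulVecE D u) : ℝ)
            ≤ h₂ * c₂ ^ α * (N t) ^ (-α) * (Lam * ‖u‖ ^ 2) := h
          _ = B * ((N t) ^ (-α) * ‖u‖ ^ 2) := by rw [hBdef]; ring
      -- perturbation bound
      have hyE : ‖y t‖ ^ (1 - α + δ) ≤ Ce * (N t) ^ (1 - α + δ) := by
        rcases le_or_gt 0 (1 - α + δ) with he | he
        · have h1 : ‖y t‖ ≤ (1/c₁) * N t := by
            rw [one_div, inv_mul_eq_div, le_div_iff₀ hc₁, mul_comm]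
            exact (hc (y t)).1
          calc ‖y t‖ ^ (1 - α + δ) ≤ ((1/c₁) * N t) ^ (1 - α + δ) :=
                Real.rpow_le_rpow (norm_nonneg _) h1 he
            _ = (1/c₁) ^ (1 - α + δ) * (N t) ^ (1 - α + δ) :=
                Real.mul_rpow (by positivity) (le_of_lt hNt)
            _ ≤ Ce * (N t) ^ (1 - α + δ) := by
                apply mul_le_mul_of_nonneg_right (le_max_left _ _)
                positivity
        · have h1 : (1/c₂) * N t ≤ ‖y t‖ := by
            rw [one_div, inv_mul_eq_div, div_le_iff₀ hc₂, mul_comm]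
            exact (hc (y t)).2
          calc ‖y t‖ ^ (1 - α + δ) ≤ ((1/c₂) * N t) ^ (1 - α + δ) :=
                Real.rpow_le_rpow_of_nonpos (by positivity) h1 (le_of_lt he)
            _ = (1/c₂) ^ (1 - α + δ) * (N t) ^ (1 - α + δ) :=
                Real.mul_rpow (by positivity) (le_of_lt hNt)
            _ ≤ Ce * (N t) ^ (1 - α + δ) := by
                apply mul_le_mul_of_nonneg_right (le_max_right _ _)
                positivity
      have hfI : |(inner ℝ u (matCLM S (f t)) : ℝ)| ≤ Cf * ((N t) * (N t) ^ (1 - α + δ)) := by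
        calc |(inner ℝ u (matCLM S (f t)) : ℝ)| ≤ ‖u‖ * ‖matCLM S (f t)‖ :=
              abs_real_inner_le_norm _ _
          _ ≤ ‖u‖ * (c₂ * ‖f t‖) := mul_le_mul_of_nonneg_left (hc (f t)).2 (norm_nonneg _)
          _ ≤ ‖u‖ * (c₂ * (M * ‖y t‖ ^ (1 - α + δ))) := by
              apply mul_le_mul_of_nonneg_left _ (norm_nonneg _)
              exact mul_le_mul_of_nonneg_left (hfb t hty) (le_of_lt hc₂)
          _ ≤ ‖u‖ * (c₂ * (M * (Ce * (N t) ^ (1 - α + δ)))) := by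
              apply mul_le_mul_of_nonneg_left _ (norm_nonneg _)
              apply mul_le_mul_of_nonneg_left _ (le_of_lt hc₂)
              exact mul_le_mul_of_nonneg_left hyE (le_of_lt hM)
          _ = Cf * ((N t) * (N t) ^ (1 - α + δ)) := by rw [hCfdef, hNu]; ring
      -- rpow algebra
      have e1 : (N t) ^ (-α) * ‖u‖ ^ 2 = (N t) ^ (2 - α) := by
        rw [← hNu, ← Real.rpow_natCast (N t) 2, ← Real.rpow_add hNt]
        congr 1
        push_cast; ring
      have e2 : (N t) * (N t) ^ (1 - α + δ) = (N t) ^ δ * (N t) ^ (2 - α) := by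
        calc (N t) * (N t) ^ (1 - α + δ) = (N t) ^ (1:ℝ) * (N t) ^ (1 - α + δ) := by
              rw [Real.rpow_one]
          _ = (N t) ^ (1 + (1 - α + δ)) := (Real.rpow_add hNt _ _).symm
          _ = (N t) ^ (δ + (2 - α)) := by congr 1; ring
          _ = (N t) ^ δ * (N t) ^ (2 - α) := Real.rpow_add hNt _ _
      have e3 : (N t) ^ (2 - α) * (N t) ^ (α - 2) = 1 := by
        rw [← Real.rpow_add hNt]
        have : (2 - α) + (α - 2) = 0 := by ring
        rw [this, Real.rpow_zero]
      have hP : ((inner ℝ u u : ℝ)) ^ (α/2 - 1) = (N t) ^ (α - 2) := by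
        rw [real_inner_self_eq_norm_sq, ← hNu, ← Real.rpow_natCast (N t) 2,
          ← Real.rpow_mul (le_of_lt hNt)]
        congr 1
        push_cast; ring
      -- combine into bounds on the inner product with the derivative
      have hUp : (inner ℝ u (matCLM S v) : ℝ) ≤ (-b + Cf * (N t) ^ δ) * (N t) ^ (2 - α) := by
        rw [hIw]
        have l1 : -(H (y t)) * (inner ℝ u (mulVecE D u) : ℝ) ≤ -(b * (N t) ^ (2 - α)) := by
          rw [← e1]; nlinarith [hprod1]
        have l2 : (inner ℝ u (matCLM S (f t)) : ℝ) ≤ Cf * ((N t) ^ δ * (N t) ^ (2 - α)) := by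
          rw [← e2]; exact le_trans (le_abs_self _) hfI
        nlinarith [l1, l2]
      have hLo : (-B - Cf * (N t) ^ δ) * (N t) ^ (2 - α) ≤ (inner ℝ u (matCLM S v) : ℝ) := by
        rw [hIw]
        have l1 : -(B * (N t) ^ (2 - α)) ≤ -(H (y t)) * (inner ℝ u (mulVecE D u) : ℝ) := by
          rw [← e1]; nlinarith [hprod2]
        have l2 : -(Cf * ((N t) ^ δ * (N t) ^ (2 - α))) ≤ (inner ℝ u (matCLM S (f t)) : ℝ) := by
          rw [← e2]; exact neg_le_of_abs_le hfI
        nlinarith [l1, l2]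
      -- final assembly
      have hdval : ((inner ℝ u (matCLM S v) : ℝ) + (inner ℝ (matCLM S v) u : ℝ)) * (α/2) *
          ((inner ℝ u u : ℝ)) ^ (α/2 - 1) =
          (inner ℝ u (matCLM S v) : ℝ) * (α * (N t) ^ (α - 2)) := by
        rw [real_inner_comm (matCLM S v) u, hP]; ring
      have hPpos : 0 < (N t) ^ (α - 2) := Real.rpow_pos_of_pos hNt _
      refine ⟨_, hψder, ?_, ?_⟩
      · rw [hdval]
        calc (inner ℝ u (matCLM S v) : ℝ) * (α * (N t) ^ (α - 2))
            ≤ ((-b + Cf * (N t) ^ δ) * (N t) ^ (2 - α)) * (α * (N t) ^ (α - 2)) :=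
              mul_le_mul_of_nonneg_right hUp (by positivity)
          _ = α * (-b + Cf * (N t) ^ δ) * ((N t) ^ (2 - α) * (N t) ^ (α - 2)) := by ring
          _ = α * (-b + Cf * (N t) ^ δ) := by rw [e3, mul_one]
      · rw [hdval]
        calc α * (-B - Cf * (N t) ^ δ)
            = α * (-B - Cf * (N t) ^ δ) * ((N t) ^ (2 - α) * (N t) ^ (α - 2)) := by
              rw [e3, mul_one]
          _ = ((-B - Cf * (N t) ^ δ) * (N t) ^ (2 - α)) * (α * (N t) ^ (α - 2)) := by ring
          _ ≤ (inner ℝ u (matCLM S v) : ℝ) * (α * (N t) ^ (α - 2)) :=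
              mul_le_mul_of_nonneg_right hLo (by positivity)
    -- smallness threshold
    set ρ : ℝ := (b / (2 * Cf)) ^ (1/δ) with hρdef
    have hρ : 0 < ρ := Real.rpow_pos_of_pos (by positivity) _
    have hρδ : Cf * ρ ^ δ = b / 2 := by
      rw [hρdef, ← Real.rpow_mul (by positivity), one_div_mul_cancel (ne_of_gt hδ),
        Real.rpow_one]
      field_simp
    -- refined derivative bounds in the small region
    set bl : ℝ := α * b / 2 with hbldef
    set Bu : ℝ := α * (B + b / 2) with hBudef
    have hbl : 0 < bl := by positivity
    have hBu : 0 < Bu := by positivity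
    have key2 : ∀ t ∈ Ioo t₀ T', N t ≤ ρ → ∃ d : ℝ,
        HasDerivAt (fun s => (N s) ^ α) d t ∧ d ≤ -bl ∧ -Bu ≤ d := by
      intro t ht hsmall
      obtain ⟨d, hd, hd1, hd2⟩ := key t ht
      have hNt : 0 ≤ N t := norm_nonneg _
      have hpow : (N t) ^ δ ≤ ρ ^ δ := Real.rpow_le_rpow hNt hsmall (le_of_lt hδ)
      have h3 : Cf * (N t) ^ δ ≤ b / 2 := by
        calc Cf * (N t) ^ δ ≤ Cf * ρ ^ δ := mul_le_mul_of_nonneg_left hpow (le_of_lt hCf)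
          _ = b / 2 := hρδ
      have h4 : 0 ≤ Cf * (N t) ^ δ := by positivity
      refine ⟨d, hd, ?_, ?_⟩
      · calc d ≤ α * (-b + Cf * (N t) ^ δ) := hd1
          _ ≤ α * (-b + b / 2) := by nlinarith
          _ = -bl := by rw [hbldef]; ring
      · calc -Bu = α * (-B - b/2) := by rw [hBudef]; ring
          _ ≤ α * (-B - Cf * (N t) ^ δ) := by nlinarith
          _ ≤ d := hd2
    -- choose t₁ with N small on [t₁, T')
    have hball : ∀ᶠ s in 𝓝[<] T', ‖y s‖ < ρ / c₂ := by
      have := Metric.tendsto_nhds.mp hylim (ρ / c₂) (by positivity)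
      filter_upwards [this] with s hs
      rwa [dist_zero_right] at hs
    obtain ⟨a, ha, haIoo⟩ := mem_nhdsLT_iff_exists_Ioo_subset.mp hball
    set t₁ : ℝ := max t₀ ((a + T') / 2) with ht₁def
    have haT : a < T' := ha
    have ht₁0 : t₀ ≤ t₁ := le_max_left _ _
    have ht₁T : t₁ < T' := max_lt hT' (by linarith)
    have ht₁a : a < t₁ := lt_of_lt_of_le (by linarith) (le_max_right _ _)
    have hsmall : ∀ s ∈ Ico t₁ T', N s ≤ ρ := by
      intro s hs
      have hmem : s ∈ Ioo a T' := ⟨lt_of_lt_of_le ht₁a hs.1, hs.2⟩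
      have hys : ‖y s‖ < ρ / c₂ := haIoo hmem
      calc N s ≤ c₂ * ‖y s‖ := (hc (y s)).2
        _ ≤ c₂ * (ρ / c₂) := mul_le_mul_of_nonneg_left (le_of_lt hys) (le_of_lt hc₂)
        _ = ρ := by rw [mul_comm, div_mul_cancel₀ ρ (ne_of_gt hc₂)]
    -- continuity of ψ = N ^ α on Ico t₀ T'
    have hψcont : ContinuousOn (fun s => (N s) ^ α) (Ico t₀ T') := by
      apply ContinuousOn.rpow_const
      · exact ((matCLM S).continuous.comp_continuousOn hycont).norm
      · exact fun x _ => Or.inr (le_of_lt hα)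
    -- two-sided difference estimates
    have claim : ∀ t ∈ Ico t₁ T', ∀ s ∈ Ico t₁ T', t ≤ s →
        bl * (s - t) ≤ (N t) ^ α - (N s) ^ α ∧
          (N t) ^ α - (N s) ^ α ≤ Bu * (s - t) := by
      intro t ht s hs hts
      have hsub1 : Icc t s ⊆ Ico t₀ T' := fun x hx =>
        ⟨le_trans (le_trans ht₁0 ht.1) hx.1, lt_of_le_of_lt hx.2 hs.2⟩
      have hd : ∀ x ∈ Ioo t s, ∃ d, HasDerivAt (fun r => (N r) ^ α) d x ∧
          d ≤ -bl ∧ -Bu ≤ d := by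
        intro x hx
        refine key2 x ⟨lt_of_le_of_lt (le_trans ht₁0 ht.1) hx.1, lt_trans hx.2 hs.2⟩ ?_
        exact hsmall x ⟨le_trans ht.1 (le_of_lt hx.1), lt_trans hx.2 hs.2⟩
      have hg₁ : AntitoneOn (fun x => (N x) ^ α + bl * x) (Icc t s) := by
        apply antitoneOn_of_deriv_nonpos (convex_Icc t s)
        · exact (hψcont.mono hsub1).add ((continuous_const.mul continuous_id).continuousOn)
        · intro x hx
          rw [interior_Icc] at hx
          obtain ⟨d, hdd, _, _⟩ := hd x hx
          exact (hdd.add ((hasDerivAt_id x).const_mul bl)).differentiableAt.differentiableWithinAt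
        · intro x hx
          rw [interior_Icc] at hx
          obtain ⟨d, hdd, hle, _⟩ := hd x hx
          have hdd2 : HasDerivAt (fun x => (N x) ^ α + bl * x) (d + bl) x := by
            have h := hdd.add ((hasDerivAt_id x).const_mul bl)
            rw [mul_one] at h
            exact h
          rw [hdd2.deriv]
          linarith
      have hg₂ : MonotoneOn (fun x => (N x) ^ α + Bu * x) (Icc t s) := by
        apply monotoneOn_of_deriv_nonneg (convex_Icc t s)
        · exact (hψcont.mono hsub1).add ((continuous_const.mul continuous_id).continuousOn)
        · intro x hx
          rw [interior_Icc] at hx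
          obtain ⟨d, hdd, _, _⟩ := hd x hx
          exact (hdd.add ((hasDerivAt_id x).const_mul Bu)).differentiableAt.differentiableWithinAt
        · intro x hx
          rw [interior_Icc] at hx
          obtain ⟨d, hdd, _, hge⟩ := hd x hx
          have hdd2 : HasDerivAt (fun x => (N x) ^ α + Bu * x) (d + Bu) x := by
            have h := hdd.add ((hasDerivAt_id x).const_mul Bu)
            rw [mul_one] at h
            exact h
          rw [hdd2.deriv]
          linarith
      have h1 := hg₁ ⟨le_refl t, hts⟩ ⟨hts, le_refl s⟩ hts
      have h2 := hg₂ ⟨le_refl t, hts⟩ ⟨hts, le_refl s⟩ hts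
      simp only [] at h1 h2
      constructor <;> linarith
    -- limit as s → T'
    have hψ0 : Tendsto (fun s => (N s) ^ α) (𝓝[<] T') (𝓝 0) := by
      have h1 : Tendsto (fun s => N s) (𝓝[<] T') (𝓝 0) := by
        have h2 : Tendsto (fun s => matCLM S (y s)) (𝓝[<] T') (𝓝 (matCLM S 0)) :=
          ((matCLM S).continuous.tendsto 0).comp hylim
        rw [map_zero] at h2
        have h3 := h2.norm
        rwa [norm_zero] at h3
      have h3 : ContinuousAt (fun x : ℝ => x ^ α) 0 :=
        Real.continuousAt_rpow_const 0 α (Or.inr (le_of_lt hα))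
      have h4 := h3.tendsto.comp h1
      rw [Real.zero_rpow (ne_of_gt hα)] at h4; exact h4
    have hnear : ∀ t ∈ Ico t₁ T',
        bl * (T' - t) ≤ (N t) ^ α ∧ (N t) ^ α ≤ Bu * (T' - t) := by
      intro t ht
      have hev : ∀ᶠ s in 𝓝[<] T', s ∈ Ioo t T' :=
        Ioo_mem_nhdsLT_of_mem ⟨ht.2, le_refl T'⟩
      have htT : Tendsto (fun s : ℝ => s) (𝓝[<] T') (𝓝 T') :=
        (continuous_id.tendsto T').mono_left nhdsWithin_le_nhds
      constructor
      · have htd : Tendsto (fun s => bl * (s - t) + (N s) ^ α) (𝓝[<] T')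
            (𝓝 (bl * (T' - t) + 0)) := ((htT.sub_const t).const_mul bl).add hψ0
        rw [add_zero] at htd
        refine le_of_tendsto htd ?_
        filter_upwards [hev] with s hs
        have h5 := (claim t ht s ⟨le_trans ht.1 (le_of_lt hs.1), hs.2⟩ (le_of_lt hs.1)).1
        linarith
      · have htd : Tendsto (fun s => Bu * (s - t) + (N s) ^ α) (𝓝[<] T')
            (𝓝 (Bu * (T' - t) + 0)) := ((htT.sub_const t).const_mul Bu).add hψ0
        rw [add_zero] at htd
        refine ge_of_tendsto htd ?_
        filter_upwards [hev] with s hs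
        have h5 := (claim t ht s ⟨le_trans ht.1 (le_of_lt hs.1), hs.2⟩ (le_of_lt hs.1)).2
        linarith
    -- compact part [t₀, t₁]
    have hIccsub : Icc t₀ t₁ ⊆ Ico t₀ T' := fun x hx => ⟨hx.1, lt_of_le_of_lt hx.2 ht₁T⟩
    have hNcont : ContinuousOn N (Icc t₀ t₁) :=
      (((matCLM S).continuous.comp_continuousOn hycont).norm).mono hIccsub
    have hIccne : (Icc t₀ t₁).Nonempty := ⟨t₀, le_refl t₀, ht₁0⟩
    obtain ⟨tm, htm, hmin⟩ := isCompact_Icc.exists_isMinOn hIccne hNcont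
    obtain ⟨tM, htM, hmax⟩ := isCompact_Icc.exists_isMaxOn hIccne hNcont
    have hmpos : 0 < N tm := hNpos tm (hIccsub htm)
    set K₁ : ℝ := min bl ((N tm) ^ α / (T' - t₀)) with hK₁def
    set K₂ : ℝ := max Bu ((N tM) ^ α / (T' - t₁)) with hK₂def
    have hTt₀ : 0 < T' - t₀ := by linarith
    have hTt₁ : 0 < T' - t₁ := by linarith
    have hK₁pos : 0 < K₁ := lt_min hbl (by positivity)
    have hK₂pos : 0 < K₂ := lt_of_lt_of_le hBu (le_max_left _ _)
    refine ⟨K₁, K₂, hK₁pos, hK₂pos, fun t ht => ?_⟩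
    have hTt : 0 < T' - t := by linarith [ht.2]
    rcases le_or_gt t₁ t with hcase | hcase
    · obtain ⟨hl, hr⟩ := hnear t ⟨hcase, ht.2⟩
      constructor
      · calc K₁ * (T' - t) ≤ bl * (T' - t) :=
            mul_le_mul_of_nonneg_right (min_le_left _ _) (le_of_lt hTt)
          _ ≤ (N t) ^ α := hl
      · calc (N t) ^ α ≤ Bu * (T' - t) := hr
          _ ≤ K₂ * (T' - t) := mul_le_mul_of_nonneg_right (le_max_left _ _) (le_of_lt hTt)
    · have htIcc : t ∈ Icc t₀ t₁ := ⟨ht.1, le_of_lt hcase⟩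
      have hNm : N tm ≤ N t := hmin htIcc
      have hNM : N t ≤ N tM := hmax htIcc
      constructor
      · have hstep : K₁ * (T' - t) ≤ ((N tm) ^ α / (T' - t₀)) * (T' - t₀) := by
          apply mul_le_mul (min_le_right _ _) (by linarith [ht.1]) (le_of_lt hTt)
          positivity
        calc K₁ * (T' - t) ≤ ((N tm) ^ α / (T' - t₀)) * (T' - t₀) := hstep
          _ = (N tm) ^ α := by field_simp
          _ ≤ (N t) ^ α := Real.rpow_le_rpow (le_of_lt hmpos) hNm (le_of_lt hα)
      · calc (N t) ^ α ≤ (N tM) ^ α :=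
            Real.rpow_le_rpow (norm_nonneg _) hNM (le_of_lt hα)
          _ = ((N tM) ^ α / (T' - t₁)) * (T' - t₁) := by field_simp
          _ ≤ K₂ * (T' - t) := by
            apply mul_le_mul (le_max_right _ _) (by linarith) (le_of_lt hTt₁)
            exact le_of_lt hK₂pos
  -- conclude
  obtain ⟨K₁, K₂, hK₁, hK₂, hK⟩ := hNb
  refine ⟨h₁ * c₁ ^ α / K₂, h₂ * c₂ ^ α / K₁, by positivity, by positivity, fun t ht => ?_⟩
  have hTt : 0 < T' - t := sub_pos.mpr ht.2
  have hNt := hNpos t ht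
  have hNα : 0 < (N t) ^ α := Real.rpow_pos_of_pos hNt α
  have hneg : (N t) ^ (-α) = ((N t) ^ α)⁻¹ := Real.rpow_neg (le_of_lt hNt) α
  obtain ⟨hK1t, hK2t⟩ := hK t ht
  obtain ⟨hH1, hH2⟩ := hHN t ht
  rw [hneg] at hH1 hH2
  have hcoef₁ : (0:ℝ) ≤ h₁ * c₁ ^ α := by positivity
  have hcoef₂ : (0:ℝ) ≤ h₂ * c₂ ^ α := by positivity
  constructor
  · have hinv : (K₂ * (T' - t))⁻¹ ≤ ((N t) ^ α)⁻¹ := by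
      apply inv_anti₀ hNα hK2t
    calc h₁ * c₁ ^ α / K₂ * (T' - t)⁻¹ = h₁ * c₁ ^ α * (K₂ * (T' - t))⁻¹ := by
          rw [mul_inv]; ring
      _ ≤ h₁ * c₁ ^ α * ((N t) ^ α)⁻¹ := mul_le_mul_of_nonneg_left hinv hcoef₁
      _ ≤ H (y t) := hH1
  · have hinv : ((N t) ^ α)⁻¹ ≤ (K₁ * (T' - t))⁻¹ := by
      apply inv_anti₀ (by positivity) hK1t
    calc H (y t) ≤ h₂ * c₂ ^ α * ((N t) ^ α)⁻¹ := hH2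
      _ ≤ h₂ * c₂ ^ α * (K₁ * (T' - t))⁻¹ := mul_le_mul_of_nonneg_left hinv hcoef₂
      _ = h₂ * c₂ ^ α / K₁ * (T' - t)⁻¹ := by rw [mul_inv]; ring
end
end

section
/- Define λ(t) = (y(t)·(A y(t)))/|y(t)|² and v(t) = y(t)/|y(t)| for t ∈ [t₀, T*). Then the integral ∫_{t₀}^{T*} H(y(τ)) |A v(τ) − λ(τ) v(τ)|² dτ is finite. -/
open Set Real Filter Topology MeasureTheory

set_option maxHeartbeats 1000000
set_option synthInstance.maxHeartbeats 200000

noncomputable section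

def mulVecCLM {n : ℕ} (A : Matrix (Fin n) (Fin n) ℝ) :
    EuclideanSpace ℝ (Fin n) →L[ℝ] EuclideanSpace ℝ (Fin n) :=
  LinearMap.toContinuousLinearMap
    { toFun := fun x => mulVecE A x
      map_add' := fun x y => by ext i; simp [mulVecE, Matrix.mulVec_add]
      map_smul' := fun c x => by ext i; simp [mulVecE, Matrix.mulVec_smul] }

lemma mulVecCLM_apply {n : ℕ} (A : Matrix (Fin n) (Fin n) ℝ) (x : EuclideanSpace ℝ (Fin n)) :
    mulVecCLM A x = mulVecE A x := rfl

lemma inner_mulVecE_symm {n : ℕ} {A : Matrix (Fin n) (Fin n) ℝ} (hA : A.IsSymm)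
    (x z : EuclideanSpace ℝ (Fin n)) :
    (inner ℝ x (mulVecE A z) : ℝ) = inner ℝ (mulVecE A x) z := by
  simp only [PiLp.inner_apply, RCLike.inner_apply, conj_trivial, mulVecE]
  rw [show (∑ i, A.mulVec z.ofLp i * x.ofLp i) = dotProduct (A.mulVec z.ofLp) x.ofLp from rfl]
  rw [show (∑ i, z.ofLp i * A.mulVec x.ofLp i) = dotProduct z.ofLp (A.mulVec x.ofLp) from rfl]
  rw [Matrix.dotProduct_mulVec, ← Matrix.mulVec_transpose, hA.eq]

lemma aux_integrableOn_of_bound (g : ℝ → ℝ) (t₀ T' K : ℝ) (hT : t₀ < T')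
    (hgc : ContinuousOn g (Ioo t₀ T'))
    (hgnn : ∀ t ∈ Ioo t₀ T', 0 ≤ g t)
    (hbound : ∀ c d, t₀ < c → c ≤ d → d < T' → (∫ t in Icc c d, g t) ≤ K) :
    IntegrableOn g (Ioo t₀ T') volume := by
  set w := (T' - t₀) / 2 with hw
  have hw0 : 0 < w := by simp [hw]; linarith
  set a : ℕ → ℝ := fun i => t₀ + w / (i + 1) with ha
  set b : ℕ → ℝ := fun i => T' - w / (i + 1) with hb
  have hdiv : ∀ i : ℕ, 0 < w / (i + 1 : ℝ) ∧ w / (i + 1 : ℝ) ≤ w := by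
    intro i
    constructor
    · positivity
    · apply div_le_self hw0.le
      have : (0:ℝ) ≤ (i:ℝ) := Nat.cast_nonneg i
      linarith
  have hab : ∀ i, t₀ < a i ∧ a i ≤ b i ∧ b i < T' := by
    intro i
    obtain ⟨h1, h2⟩ := hdiv i
    refine ⟨by simp [ha]; linarith, ?_, by simp [hb]; linarith⟩
    simp only [ha, hb, hw] at *
    linarith
  have htend0 : Tendsto (fun i : ℕ => w / (i + 1 : ℝ)) atTop (𝓝 0) := by
    apply Tendsto.div_atTop tendsto_const_nhds
    exact tendsto_atTop_add_const_right _ 1 tendsto_natCast_atTop_atTop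
  have hta : Tendsto a atTop (𝓝 t₀) := by
    simpa using tendsto_const_nhds.add htend0
  have htb : Tendsto b atTop (𝓝 T') := by
    simpa using tendsto_const_nhds.sub htend0
  have hφ : AECover ((volume : Measure ℝ).restrict (Ioo t₀ T')) atTop
      (fun i => Icc (a i) (b i)) := MeasureTheory.aecover_Ioo_of_Icc hta htb
  have hsub : ∀ i, Icc (a i) (b i) ⊆ Ioo t₀ T' := by
    intro i x hx
    obtain ⟨h1, h2, h3⟩ := hab i
    exact ⟨lt_of_lt_of_le h1 hx.1, lt_of_le_of_lt hx.2 h3⟩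
  have hint : ∀ i, IntegrableOn g (Icc (a i) (b i)) volume := by
    intro i
    exact (hgc.mono (hsub i)).integrableOn_Icc.mono_set (subset_refl _)
  have hrr : ∀ i : ℕ, ((volume : Measure ℝ).restrict (Ioo t₀ T')).restrict (Icc (a i) (b i))
      = (volume : Measure ℝ).restrict (Icc (a i) (b i)) := by
    intro i
    rw [Measure.restrict_restrict measurableSet_Icc, inter_eq_self_of_subset_left (hsub i)]
  refine hφ.integrable_of_integral_norm_bounded K ?_ ?_
  · intro i
    unfold IntegrableOn
    rw [hrr i]
    exact hint i
  · filter_upwards with i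
    rw [show (∫ x in Icc (a i) (b i), ‖g x‖ ∂((volume : Measure ℝ).restrict (Ioo t₀ T')))
        = ∫ x in Icc (a i) (b i), ‖g x‖ from by rw [hrr i]]
    rw [MeasureTheory.setIntegral_congr_fun measurableSet_Icc
      (fun x hx => Real.norm_of_nonneg (hgnn x (hsub i hx)))]
    obtain ⟨h1, h2, h3⟩ := hab i
    exact hbound _ _ h1 h2 h3

theorem finite_weighted_deficiency_integral (n : ℕ) (hn : 1 ≤ n)
    (α δ M t₀ T' : ℝ) (hα : 0 < α) (hδ : 0 < δ) (hM : 0 < M)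
    (ht₀ : 0 ≤ t₀) (hT' : t₀ < T')
    (A : Matrix (Fin n) (Fin n) ℝ) (hAsymm : A.IsSymm)
    (hApos : ∀ x : EuclideanSpace ℝ (Fin n), x ≠ 0 → 0 < (inner ℝ x (mulVecE A x) : ℝ))
    (H : EuclideanSpace ℝ (Fin n) → ℝ)
    (hHhom : ∀ x : EuclideanSpace ℝ (Fin n), x ≠ 0 → ∀ s : ℝ, 0 < s →
      H (s • x) = s ^ (-α) * H x)
    (hHpos : ∀ x : EuclideanSpace ℝ (Fin n), ‖x‖ = 1 → 0 < H x)
    (hHcont : ContinuousOn H (Metric.sphere (0 : EuclideanSpace ℝ (Fin n)) 1))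
    (y f : ℝ → EuclideanSpace ℝ (Fin n))
    (hycont : ContinuousOn y (Ico t₀ T'))
    (hyne : ∀ t ∈ Ico t₀ T', y t ≠ 0)
    (hylim : Tendsto y (𝓝[<] T') (𝓝 0))
    (hode : ∀ t ∈ Ioo t₀ T', HasDerivAt y (-(H (y t)) • mulVecE A (y t) + f t) t)
    (hfcont : ContinuousOn f (Ico t₀ T'))
    (hfb : ∀ t ∈ Ico t₀ T', ‖f t‖ ≤ M * ‖y t‖ ^ (1 - α + δ))
    :
    IntegrableOn
      (fun τ => H (y τ) *
        ‖mulVecE A (‖y τ‖⁻¹ • y τ) - ((inner ℝ (y τ) (mulVecE A (y τ)) : ℝ) / ‖y τ‖ ^ 2) • (‖y τ‖⁻¹ • y τ)‖ ^ 2)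
      (Ioo t₀ T') volume := by
  -- positivity of the norm on Ico
  have hr : ∀ t ∈ Ico t₀ T', (0:ℝ) < ‖y t‖ := fun t ht => norm_pos_iff.mpr (hyne t ht)
  -- operator norm bound
  set CA : ℝ := ‖mulVecCLM A‖ with hCA_def
  have hCA0 : 0 ≤ CA := norm_nonneg (mulVecCLM A)
  have hCA : ∀ x : EuclideanSpace ℝ (Fin n), ‖mulVecE A x‖ ≤ CA * ‖x‖ := by
    intro x; simpa [mulVecCLM_apply] using (mulVecCLM A).le_opNorm x
  -- unit vectors
  have hvmem : ∀ t ∈ Ico t₀ T', (‖y t‖⁻¹ • y t) ∈ Metric.sphere (0 : EuclideanSpace ℝ (Fin n)) 1 := by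
    intro t ht
    have := hr t ht
    simp [mem_sphere_zero_iff_norm, norm_smul, abs_of_pos (inv_pos.mpr this),
      inv_mul_cancel₀ this.ne']
  -- sphere is nonempty and compact
  have hsne : (Metric.sphere (0 : EuclideanSpace ℝ (Fin n)) 1).Nonempty := by
    refine ⟨EuclideanSpace.single ⟨0, hn⟩ (1:ℝ), ?_⟩
    simp [mem_sphere_zero_iff_norm, EuclideanSpace.norm_single]
  -- quadratic form continuity
  have hq_cont : Continuous (fun x : EuclideanSpace ℝ (Fin n) => (inner ℝ x (mulVecE A x) : ℝ)) := by
    simp only [← mulVecCLM_apply]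
    exact continuous_id.inner (mulVecCLM A).continuous
  -- minimum of the quadratic form on the sphere
  obtain ⟨x₀, hx₀s, hx₀min⟩ := (isCompact_sphere (0 : EuclideanSpace ℝ (Fin n)) 1).exists_isMinOn
    hsne hq_cont.continuousOn
  set lmin : ℝ := (inner ℝ x₀ (mulVecE A x₀) : ℝ) with hlmin_def
  have hlmin : 0 < lmin := hApos x₀ (by
    intro h; rw [mem_sphere_zero_iff_norm] at hx₀s; rw [h] at hx₀s; simp at hx₀s)
  -- bounds on H on the sphere
  obtain ⟨xm, hxms, hxmmin⟩ := (isCompact_sphere (0 : EuclideanSpace ℝ (Fin n)) 1).exists_isMinOn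
    hsne hHcont
  obtain ⟨xM, hxMs, hxMmax⟩ := (isCompact_sphere (0 : EuclideanSpace ℝ (Fin n)) 1).exists_isMaxOn
    hsne hHcont
  set Hmin : ℝ := H xm with hHmin_def
  set Hmax : ℝ := H xM with hHmax_def
  have hHmin0 : 0 < Hmin := hHpos xm (mem_sphere_zero_iff_norm.mp hxms)
  -- homogeneity representation
  have hHrep : ∀ x : EuclideanSpace ℝ (Fin n), x ≠ 0 → H x = ‖x‖ ^ (-α) * H (‖x‖⁻¹ • x) := by
    intro x hx
    have hnx : (0:ℝ) < ‖x‖ := norm_pos_iff.mpr hx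
    have h1 : (‖x‖ : ℝ) • (‖x‖⁻¹ • x) = x := by
      rw [smul_smul, mul_inv_cancel₀ hnx.ne', one_smul]
    have := hHhom (‖x‖⁻¹ • x) (smul_ne_zero (inv_ne_zero hnx.ne') hx) ‖x‖ hnx
    rw [h1] at this
    exact this
  -- abbreviations (these rewrite the goal)
  set lam : ℝ → ℝ := fun τ => (inner ℝ (y τ) (mulVecE A (y τ)) : ℝ) / ‖y τ‖ ^ 2 with hlam_def
  set v : ℝ → EuclideanSpace ℝ (Fin n) := fun τ => ‖y τ‖⁻¹ • y τ with hv_def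
  set w : ℝ → EuclideanSpace ℝ (Fin n) := fun τ => mulVecE A (v τ) - lam τ • v τ with hw_def
  set g : ℝ → ℝ := fun τ => H (y τ) * ‖w τ‖ ^ 2 with hg_def
  set e : ℝ → ℝ := fun τ => (inner ℝ (w τ) (f τ) : ℝ) / ‖y τ‖ with he_def
  -- lambda as quadratic form of the unit vector
  have hlam_eq : ∀ t ∈ Ico t₀ T', lam t = (inner ℝ (v t) (mulVecE A (v t)) : ℝ) := by
    intro t ht
    have h0 := (hr t ht).ne'
    have hAv : mulVecE A (v t) = ‖y t‖⁻¹ • mulVecE A (y t) := by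
      rw [hv_def, ← mulVecCLM_apply, ← mulVecCLM_apply]
      exact (mulVecCLM A).map_smul _ _
    have h2 : (inner ℝ (v t) (mulVecE A (v t)) : ℝ)
        = ‖y t‖⁻¹ * (‖y t‖⁻¹ * (inner ℝ (y t) (mulVecE A (y t)) : ℝ)) := by
      rw [hAv, hv_def]
      rw [real_inner_smul_left, real_inner_smul_right]
    have h3 : ∀ q R : ℝ, R ≠ 0 → q / R ^ 2 = R⁻¹ * (R⁻¹ * q) := by
      intro q R hR0
      rw [pow_two, div_eq_mul_inv, mul_inv]
      ring
    rw [hlam_def, h2]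
    exact h3 _ _ h0
  have hvnorm : ∀ t ∈ Ico t₀ T', ‖v t‖ = 1 := by
    intro t ht
    exact mem_sphere_zero_iff_norm.mp (hvmem t ht)
  have hAv_norm : ∀ t ∈ Ico t₀ T', ‖mulVecE A (v t)‖ ≤ CA := by
    intro t ht
    calc ‖mulVecE A (v t)‖ ≤ CA * ‖v t‖ := hCA _
    _ = CA := by rw [hvnorm t ht, mul_one]
  have hlam_ub : ∀ t ∈ Ico t₀ T', lam t ≤ CA := by
    intro t ht
    rw [hlam_eq t ht]
    calc (inner ℝ (v t) (mulVecE A (v t)) : ℝ) ≤ ‖v t‖ * ‖mulVecE A (v t)‖ := real_inner_le_norm _ _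
    _ ≤ 1 * CA := by
        rw [hvnorm t ht]
        simpa [hvnorm t ht] using hAv_norm t ht
    _ = CA := one_mul _
  have hlam_lb : ∀ t ∈ Ico t₀ T', lmin ≤ lam t := by
    intro t ht
    rw [hlam_eq t ht]
    exact hx₀min (hvmem t ht)
  have hw_norm : ∀ t ∈ Ico t₀ T', ‖w t‖ ≤ 2 * CA := by
    intro t ht
    have h1 : |lam t| ≤ CA := abs_le.mpr ⟨by linarith [hlam_lb t ht, hlam_ub t ht, hlmin],
      hlam_ub t ht⟩
    calc ‖w t‖ ≤ ‖mulVecE A (v t)‖ + ‖lam t • v t‖ := norm_sub_le _ _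
    _ ≤ CA + CA := by
        refine add_le_add (hAv_norm t ht) ?_
        rw [norm_smul, hvnorm t ht, mul_one]
        exact h1
    _ = 2 * CA := by ring
  -- H along y
  have hHy_lb : ∀ t ∈ Ico t₀ T', Hmin * ‖y t‖ ^ (-α) ≤ H (y t) := by
    intro t ht
    rw [hHrep (y t) (hyne t ht)]
    have hp : (0:ℝ) ≤ ‖y t‖ ^ (-α) := (Real.rpow_pos_of_pos (hr t ht) (-α)).le
    calc Hmin * ‖y t‖ ^ (-α) = ‖y t‖ ^ (-α) * Hmin := mul_comm _ _
    _ ≤ ‖y t‖ ^ (-α) * H (‖y t‖⁻¹ • y t) := mul_le_mul_of_nonneg_left (hxmmin (hvmem t ht)) hp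
  have hHy_ub : ∀ t ∈ Ico t₀ T', H (y t) ≤ Hmax * ‖y t‖ ^ (-α) := by
    intro t ht
    rw [hHrep (y t) (hyne t ht)]
    have hp : (0:ℝ) ≤ ‖y t‖ ^ (-α) := (Real.rpow_pos_of_pos (hr t ht) (-α)).le
    calc ‖y t‖ ^ (-α) * H (‖y t‖⁻¹ • y t) ≤ ‖y t‖ ^ (-α) * Hmax :=
      mul_le_mul_of_nonneg_left (hxMmax (hvmem t ht)) hp
    _ = Hmax * ‖y t‖ ^ (-α) := mul_comm _ _
  have hHy_pos : ∀ t ∈ Ico t₀ T', 0 < H (y t) := by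
    intro t ht
    exact lt_of_lt_of_le (mul_pos hHmin0 (Real.rpow_pos_of_pos (hr t ht) (-α))) (hHy_lb t ht)
  -- continuity of all the pieces on `Ico t₀ T'`
  have hrc : ContinuousOn (fun t => ‖y t‖) (Ico t₀ T') := hycont.norm
  have hAyc : ContinuousOn (fun t => mulVecE A (y t)) (Ico t₀ T') := by
    simp only [← mulVecCLM_apply]
    exact (mulVecCLM A).continuous.comp_continuousOn hycont
  have hlamc : ContinuousOn lam (Ico t₀ T') := by
    rw [hlam_def]
    exact (hycont.inner hAyc).div (hrc.pow 2) (fun t ht => pow_ne_zero 2 (hr t ht).ne')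
  have hvc : ContinuousOn v (Ico t₀ T') := by
    rw [hv_def]
    exact ((hrc.inv₀ (fun t ht => (hr t ht).ne')).smul hycont)
  have hwc : ContinuousOn w (Ico t₀ T') := by
    rw [hw_def]
    refine ContinuousOn.sub ?_ (hlamc.smul hvc)
    simp only [← mulVecCLM_apply]
    exact (mulVecCLM A).continuous.comp_continuousOn hvc
  have hHyc : ContinuousOn (fun t => H (y t)) (Ico t₀ T') := by
    have : ContinuousOn (fun t => ‖y t‖ ^ (-α) * H (v t)) (Ico t₀ T') := by
      refine ContinuousOn.mul (hrc.rpow_const (fun t ht => Or.inl (hr t ht).ne')) ?_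
      exact hHcont.comp hvc (fun t ht => hvmem t ht)
    exact this.congr (fun t ht => hHrep (y t) (hyne t ht))
  have hgc : ContinuousOn g (Ico t₀ T') := by
    rw [hg_def]
    exact hHyc.mul (hwc.norm.pow 2)
  have hec : ContinuousOn e (Ico t₀ T') := by
    rw [he_def]
    exact (hwc.inner hfcont).div hrc (fun t ht => (hr t ht).ne')
  have hg_nn : ∀ t ∈ Ico t₀ T', 0 ≤ g t := by
    intro t ht
    exact mul_nonneg (hHy_pos t ht).le (by positivity)
  -- the fundamental derivative identity
  have hderiv : ∀ t ∈ Ioo t₀ T', HasDerivAt lam (-2 * g t + 2 * e t) t := by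
    intro t ht
    have htI : t ∈ Ico t₀ T' := ⟨ht.1.le, ht.2⟩
    have h0 : (0:ℝ) < ‖y t‖ := hr t htI
    have hNne : (inner ℝ (y t) (y t) : ℝ) ≠ 0 := by
      rw [real_inner_self_eq_norm_sq]; positivity
    set Y' := -(H (y t)) • mulVecE A (y t) + f t with hY'
    have hd := hode t ht
    have hAd : HasDerivAt (fun τ => mulVecE A (y τ)) (mulVecE A Y') t := by
      have := ((mulVecCLM A).hasFDerivAt (x := y t)).comp_hasDerivAt t hd
      exact this
    have hNd : HasDerivAt (fun τ => (inner ℝ (y τ) (y τ) : ℝ))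
        ((inner ℝ (y t) Y' : ℝ) + (inner ℝ Y' (y t) : ℝ)) t := HasDerivAt.inner ℝ hd hd
    have hQd : HasDerivAt (fun τ => (inner ℝ (y τ) (mulVecE A (y τ)) : ℝ))
        ((inner ℝ (y t) (mulVecE A Y') : ℝ) + (inner ℝ Y' (mulVecE A (y t)) : ℝ)) t :=
      HasDerivAt.inner ℝ hd hAd
    have hlam_form : lam = fun τ =>
        (inner ℝ (y τ) (mulVecE A (y τ)) : ℝ) / (inner ℝ (y τ) (y τ) : ℝ) := by
      rw [hlam_def]; funext τ; rw [real_inner_self_eq_norm_sq]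
    rw [hlam_form]
    have hdiv := hQd.div hNd hNne
    refine HasDerivAt.congr_deriv hdiv ?_
    -- scalar computation
    set R := ‖y t‖ with hR
    set a := (inner ℝ (mulVecE A (y t)) (mulVecE A (y t)) : ℝ) with ha_def
    set b := (inner ℝ (y t) (mulVecE A (y t)) : ℝ) with hb_def
    set u := (inner ℝ (mulVecE A (y t)) (f t) : ℝ) with hu_def
    set z := (inner ℝ (y t) (f t) : ℝ) with hz_def
    set hh := H (y t) with hh_def
    have hyy : (inner ℝ (y t) (y t) : ℝ) = R ^ 2 := real_inner_self_eq_norm_sq _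
    have hAyy : (inner ℝ (mulVecE A (y t)) (y t) : ℝ) = b := real_inner_comm _ _
    have hfy : (inner ℝ (f t) (y t) : ℝ) = z := real_inner_comm _ _
    have hfAy : (inner ℝ (f t) (mulVecE A (y t)) : ℝ) = u := real_inner_comm _ _
    have hyAAy : (inner ℝ (y t) (mulVecE A (mulVecE A (y t))) : ℝ) = a :=
      inner_mulVecE_symm hAsymm _ _
    have hyAf : (inner ℝ (y t) (mulVecE A (f t)) : ℝ) = u :=
      inner_mulVecE_symm hAsymm _ _
    have hAY' : mulVecE A Y' = -(hh) • mulVecE A (mulVecE A (y t)) + mulVecE A (f t) := by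
      rw [hY', ← mulVecCLM_apply, ← mulVecCLM_apply, ← mulVecCLM_apply, (mulVecCLM A).map_add,
        (mulVecCLM A).map_smul]
      rfl
    have hQ' : (inner ℝ (y t) (mulVecE A Y') : ℝ) + (inner ℝ Y' (mulVecE A (y t)) : ℝ)
        = -2 * hh * a + 2 * u := by
      rw [hAY', hY']
      simp only [inner_add_left, inner_add_right, real_inner_smul_left, real_inner_smul_right]
      rw [hyAAy, hyAf, hfAy]
      rw [show ((inner ℝ (mulVecE A (y t)) (mulVecE A (y t))):ℝ) = a from rfl]
      ring
    have hN' : (inner ℝ (y t) Y' : ℝ) + (inner ℝ Y' (y t) : ℝ) = -2 * hh * b + 2 * z := by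
      rw [hY']
      simp only [inner_add_left, inner_add_right, real_inner_smul_left, real_inner_smul_right]
      rw [hAyy, hfy]
      rw [show ((inner ℝ (y t) (mulVecE A (y t))):ℝ) = b from rfl]
      rw [show ((inner ℝ (y t) (f t)):ℝ) = z from rfl]
      ring
    have hAvt : mulVecE A (v t) = R⁻¹ • mulVecE A (y t) := by
      rw [hv_def, ← mulVecCLM_apply, ← mulVecCLM_apply]
      exact (mulVecCLM A).map_smul _ _
    have hlamt : lam t = b / R ^ 2 := by rw [hlam_def]
    have hwt : w t = R⁻¹ • mulVecE A (y t) - ((b / R ^ 2) * R⁻¹) • y t := by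
      rw [hw_def]
      show mulVecE A (v t) - lam t • v t = _
      rw [hAvt, hlamt, hv_def]
      show _ - (b / R ^ 2) • (R⁻¹ • y t) = _
      rw [smul_smul]
    have hwsq : ‖w t‖ ^ 2 = a / R ^ 2 - b ^ 2 / R ^ 4 := by
      rw [← real_inner_self_eq_norm_sq, hwt]
      simp only [inner_sub_left, inner_sub_right, real_inner_smul_left, real_inner_smul_right]
      rw [hAyy, hyy]
      rw [show ((inner ℝ (mulVecE A (y t)) (mulVecE A (y t))):ℝ) = a from rfl]
      rw [show ((inner ℝ (y t) (mulVecE A (y t))):ℝ) = b from rfl]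
      field_simp
      ring
    have hgt : g t = hh * (a / R ^ 2 - b ^ 2 / R ^ 4) := by
      rw [hg_def]
      show H (y t) * ‖w t‖ ^ 2 = _
      rw [hwsq, hh_def]
    have het : e t = u / R ^ 2 - b * z / R ^ 4 := by
      rw [he_def]
      show (inner ℝ (w t) (f t) : ℝ) / ‖y t‖ = _
      rw [hwt]
      simp only [inner_sub_left, real_inner_smul_left]
      rw [show ((inner ℝ (mulVecE A (y t)) (f t)):ℝ) = u from rfl]
      rw [show ((inner ℝ (y t) (f t)):ℝ) = z from rfl]
      rw [← hR]
      field_simp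
    rw [hgt, het, hQ', hN', hyy]
    have hRne : R ≠ 0 := h0.ne'
    field_simp
    ring
  -- a uniform bound on ‖y‖
  have hnormlim : Tendsto (fun s => ‖y s‖) (𝓝[<] T') (𝓝 0) := by
    simpa using hylim.norm
  obtain ⟨B, hB1, hB⟩ : ∃ B : ℝ, 1 ≤ B ∧ ∀ t ∈ Ico t₀ T', ‖y t‖ ≤ B := by
    have h1 : {s : ℝ | ‖y s‖ < 1} ∈ 𝓝[<] T' := hnormlim (gt_mem_nhds one_pos)
    obtain ⟨l, hl, hsub⟩ := mem_nhdsLT_iff_exists_Ioo_subset.mp h1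
    set m := max t₀ l with hm
    have hmT : m < T' := max_lt hT' hl
    have hIccsub : Icc t₀ m ⊆ Ico t₀ T' := fun x hx => ⟨hx.1, lt_of_le_of_lt hx.2 hmT⟩
    obtain ⟨tB, _, htB⟩ := (isCompact_Icc (a := t₀) (b := m)).exists_isMaxOn
      (nonempty_Icc.mpr (le_max_left _ _)) ((hycont.mono hIccsub).norm)
    refine ⟨max ‖y tB‖ 1, le_max_right _ _, ?_⟩
    intro t ht
    rcases le_or_gt t m with hc | hc
    · exact le_trans (htB ⟨ht.1, hc⟩) (le_max_left _ _)
    · have : t ∈ Ioo l T' := ⟨lt_of_le_of_lt (le_max_right t₀ l) hc, ht.2⟩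
      exact le_trans (le_of_lt (hsub this)) (le_max_right _ _)
  have hB0 : (0:ℝ) < B := lt_of_lt_of_le one_pos hB1
  -- replace δ by δ' := min δ (α/2) at the cost of a larger constant
  set δ' : ℝ := min δ (α / 2) with hδ'_def
  have hδ'0 : 0 < δ' := lt_min hδ (by linarith)
  have hδ'α : δ' < α := lt_of_le_of_lt (min_le_right _ _) (by linarith)
  have hδ'δ : δ' ≤ δ := min_le_left _ _
  set M' : ℝ := M * B ^ (δ - δ') with hM'_def
  have hM'0 : 0 < M' := mul_pos hM (Real.rpow_pos_of_pos hB0 _)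
  have hfb' : ∀ t ∈ Ico t₀ T', ‖f t‖ ≤ M' * ‖y t‖ ^ (1 - α + δ') := by
    intro t ht
    have h0 := hr t ht
    have hsplit : ‖y t‖ ^ (1 - α + δ) = ‖y t‖ ^ (1 - α + δ') * ‖y t‖ ^ (δ - δ') := by
      rw [← Real.rpow_add h0]
      ring_nf
    have h2 : ‖y t‖ ^ (δ - δ') ≤ B ^ (δ - δ') :=
      Real.rpow_le_rpow (norm_nonneg _) (hB t ht) (by linarith)
    calc ‖f t‖ ≤ M * ‖y t‖ ^ (1 - α + δ) := hfb t ht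
    _ = M * ‖y t‖ ^ (δ - δ') * ‖y t‖ ^ (1 - α + δ') := by rw [hsplit]; ring
    _ ≤ M * B ^ (δ - δ') * ‖y t‖ ^ (1 - α + δ') := by
        have h3 : (0:ℝ) ≤ ‖y t‖ ^ (1 - α + δ') := (Real.rpow_pos_of_pos h0 _).le
        have h4 : M * ‖y t‖ ^ (δ - δ') ≤ M * B ^ (δ - δ') :=
          mul_le_mul_of_nonneg_left h2 hM.le
        exact mul_le_mul_of_nonneg_right h4 h3
    _ = M' * ‖y t‖ ^ (1 - α + δ') := by rw [hM'_def]
  -- choice of t₁ where ‖y‖ is small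
  set c0 : ℝ := Hmin * lmin with hc0_def
  have hc00 : 0 < c0 := mul_pos hHmin0 hlmin
  set κ : ℝ := α / 2 * c0 with hκ_def
  have hκ0 : 0 < κ := mul_pos (by linarith) hc00
  set ρ₀ : ℝ := (c0 / (2 * M')) ^ (δ'⁻¹) with hρ₀_def
  have hρ₀0 : 0 < ρ₀ := Real.rpow_pos_of_pos (by positivity) _
  obtain ⟨t₁, ht₁I, hsmall⟩ : ∃ t₁, t₁ ∈ Ioo t₀ T' ∧ ∀ t ∈ Ico t₁ T', ‖y t‖ < ρ₀ := by
    have h1 : {s : ℝ | ‖y s‖ < ρ₀} ∈ 𝓝[<] T' := hnormlim (gt_mem_nhds hρ₀0)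
    obtain ⟨l, hl, hsub⟩ := mem_nhdsLT_iff_exists_Ioo_subset.mp h1
    set m := max l ((t₀ + T') / 2) with hm_def
    have hmT : m < T' := max_lt hl (by linarith)
    refine ⟨(m + T') / 2, ⟨?_, by linarith⟩, ?_⟩
    · have : (t₀ + T') / 2 ≤ m := le_max_right _ _
      linarith
    · intro t ht
      have hlm : l ≤ m := le_max_left _ _
      have : t ∈ Ioo l T' := ⟨by
        have := ht.1
        linarith, ht.2⟩
      exact hsub this
  have ht₁0 : t₀ < t₁ := ht₁I.1
  have ht₁T : t₁ < T' := ht₁I.2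
  -- the small-norm bound gives M' * ‖y t‖ ^ δ' ≤ c0 / 2 on [t₁, T')
  have hMrb : ∀ t ∈ Ico t₁ T', M' * ‖y t‖ ^ δ' ≤ c0 / 2 := by
    intro t ht
    have htI : t ∈ Ico t₀ T' := ⟨le_trans ht₁0.le ht.1, ht.2⟩
    have h2 : ‖y t‖ ^ δ' ≤ ρ₀ ^ δ' :=
      Real.rpow_le_rpow (norm_nonneg _) (hsmall t ht).le hδ'0.le
    have h3 : ρ₀ ^ δ' = c0 / (2 * M') := by
      rw [hρ₀_def]
      exact Real.rpow_inv_rpow (by positivity) hδ'0.ne'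
    calc M' * ‖y t‖ ^ δ' ≤ M' * (c0 / (2 * M')) := by
          rw [← h3]; exact mul_le_mul_of_nonneg_left h2 hM'0.le
    _ = c0 / 2 := by field_simp
  -- ψ = ‖y‖ ^ α via the inner ℝ product
  set ψ : ℝ → ℝ := fun τ => (inner ℝ (y τ) (y τ) : ℝ) ^ (α / 2) with hψ_def
  have hψ_eq : ∀ t ∈ Ico t₀ T', ψ t = ‖y t‖ ^ α := by
    intro t ht
    rw [hψ_def]
    show ((inner ℝ (y t) (y t) : ℝ)) ^ (α / 2) = _
    rw [real_inner_self_eq_norm_sq, ← Real.rpow_natCast ‖y t‖ 2,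
      ← Real.rpow_mul (norm_nonneg _)]
    congr 1
    ring
  have hψ_nonneg : ∀ t, 0 ≤ ψ t := fun t => Real.rpow_nonneg real_inner_self_nonneg _
  have hψ_cont : ContinuousOn ψ (Ico t₀ T') := by
    rw [hψ_def]
    exact (hycont.inner hycont).rpow_const (fun t ht => Or.inr (by positivity))
  -- derivative bound for ψ on (t₁, T')
  have hψd : ∀ t ∈ Ioo t₁ T', HasDerivAt ψ (deriv ψ t) t ∧ deriv ψ t ≤ -κ := by
    intro t ht
    have htI : t ∈ Ico t₀ T' := ⟨le_trans ht₁0.le ht.1.le, ht.2⟩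
    have htO : t ∈ Ioo t₀ T' := ⟨lt_of_lt_of_le ht₁0 ht.1.le, ht.2⟩
    have ht1 : t ∈ Ico t₁ T' := ⟨ht.1.le, ht.2⟩
    have h0 : (0:ℝ) < ‖y t‖ := hr t htI
    have hNne : (inner ℝ (y t) (y t) : ℝ) ≠ 0 := by
      rw [real_inner_self_eq_norm_sq]; positivity
    set Y' := -(H (y t)) • mulVecE A (y t) + f t with hY'
    have hd := hode t htO
    have hNd : HasDerivAt (fun τ => (inner ℝ (y τ) (y τ) : ℝ))
        ((inner ℝ (y t) Y' : ℝ) + (inner ℝ Y' (y t) : ℝ)) t := HasDerivAt.inner ℝ hd hd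
    have hψdd : HasDerivAt ψ
        (((inner ℝ (y t) Y' : ℝ) + (inner ℝ Y' (y t) : ℝ)) * (α / 2)
          * (inner ℝ (y t) (y t) : ℝ) ^ (α / 2 - 1)) t := hNd.rpow_const (Or.inl hNne)
    refine ⟨hψdd.deriv ▸ hψdd, ?_⟩
    rw [hψdd.deriv]
    -- bound the inner ℝ products
    set R := ‖y t‖ with hR
    set b := (inner ℝ (y t) (mulVecE A (y t)) : ℝ) with hb_def
    set z := (inner ℝ (y t) (f t) : ℝ) with hz_def
    set hh := H (y t) with hh_def
    have hN' : (inner ℝ (y t) Y' : ℝ) + (inner ℝ Y' (y t) : ℝ) = 2 * (-(hh * b) + z) := by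
      have hAyy : (inner ℝ (mulVecE A (y t)) (y t) : ℝ) = b := real_inner_comm _ _
      have hfy : (inner ℝ (f t) (y t) : ℝ) = z := real_inner_comm _ _
      rw [hY']
      simp only [inner_add_left, inner_add_right, real_inner_smul_left, real_inner_smul_right,
        hAyy, hfy]
      rw [show ((inner ℝ (y t) (mulVecE A (y t))):ℝ) = b from rfl]
      rw [show ((inner ℝ (y t) (f t)):ℝ) = z from rfl]
      ring
    have hhb : c0 * R ^ (2 - α) ≤ hh * b := by
      have h1 : Hmin * R ^ (-α) ≤ hh := hHy_lb t htI
      have h2 : lmin * R ^ (2:ℝ) ≤ b := by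
        have h3 : lmin ≤ lam t := hlam_lb t htI
        have h4 : lam t = b / R ^ 2 := by rw [hlam_def]
        have h5 : (R:ℝ) ^ (2:ℝ) = R ^ (2:ℕ) := Real.rpow_natCast R 2
        rw [h5]
        have h6 : (0:ℝ) < R ^ (2:ℕ) := by positivity
        calc lmin * R ^ (2:ℕ) ≤ lam t * R ^ (2:ℕ) := mul_le_mul_of_nonneg_right h3 h6.le
        _ = b := by rw [h4]; field_simp
      have h7 : (0:ℝ) < R ^ (-α) := Real.rpow_pos_of_pos h0 _
      have h8 : (0:ℝ) ≤ Hmin * R ^ (-α) := by positivity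
      calc c0 * R ^ (2 - α) = (Hmin * R ^ (-α)) * (lmin * R ^ (2:ℝ)) := by
            rw [hc0_def, show (2 - α : ℝ) = -α + 2 from by ring, Real.rpow_add h0]
            ring
      _ ≤ hh * b := by
            have h9 : (0:ℝ) < lmin * R ^ (2:ℝ) := mul_pos hlmin (Real.rpow_pos_of_pos h0 _)
            exact mul_le_mul h1 h2 h9.le (le_trans h8 h1)
    have hz' : z ≤ M' * R ^ (2 - α + δ') := by
      calc z ≤ ‖y t‖ * ‖f t‖ := real_inner_le_norm _ _
      _ ≤ R * (M' * R ^ (1 - α + δ')) := by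
          exact mul_le_mul_of_nonneg_left (hfb' t htI) (norm_nonneg _)
      _ = M' * R ^ (2 - α + δ') := by
          rw [show R * (M' * R ^ (1 - α + δ')) = M' * (R ^ (1:ℝ) * R ^ (1 - α + δ')) from by
            rw [Real.rpow_one]; ring]
          rw [← Real.rpow_add h0]
          ring_nf
    have hsplit2 : M' * R ^ (2 - α + δ') = (M' * R ^ δ') * R ^ (2 - α) := by
      rw [show (2 - α + δ' : ℝ) = δ' + (2 - α) from by ring, Real.rpow_add h0]
      ring
    have hN'le : (inner ℝ (y t) Y' : ℝ) + (inner ℝ Y' (y t) : ℝ) ≤ -(c0 * R ^ (2 - α)) := by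
      rw [hN']
      have h10 : z ≤ (c0 / 2) * R ^ (2 - α) := by
        calc z ≤ M' * R ^ (2 - α + δ') := hz'
        _ = (M' * R ^ δ') * R ^ (2 - α) := hsplit2
        _ ≤ (c0 / 2) * R ^ (2 - α) := by
            exact mul_le_mul_of_nonneg_right (hMrb t ht1) (Real.rpow_pos_of_pos h0 _).le
      nlinarith [hhb, Real.rpow_pos_of_pos h0 (2 - α)]
    have hpow : ((inner ℝ (y t) (y t) : ℝ)) ^ (α / 2 - 1) = R ^ (α - 2) := by
      rw [real_inner_self_eq_norm_sq, ← Real.rpow_natCast ‖y t‖ 2,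
        ← Real.rpow_mul (norm_nonneg _)]
      norm_num
      ring_nf
      rfl
    rw [hpow]
    have h11 : (0:ℝ) < R ^ (α - 2) := Real.rpow_pos_of_pos h0 _
    have h12 : R ^ (2 - α) * R ^ (α - 2) = 1 := by
      rw [← Real.rpow_add h0]
      norm_num
    calc ((inner ℝ (y t) Y' : ℝ) + (inner ℝ Y' (y t) : ℝ)) * (α / 2) * R ^ (α - 2)
        ≤ (-(c0 * R ^ (2 - α))) * (α / 2) * R ^ (α - 2) := by
          have h13 : (0:ℝ) ≤ (α / 2) * R ^ (α - 2) := by positivity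
          calc ((inner ℝ (y t) Y' : ℝ) + (inner ℝ Y' (y t) : ℝ)) * (α / 2) * R ^ (α - 2)
              = ((inner ℝ (y t) Y' : ℝ) + (inner ℝ Y' (y t) : ℝ)) * ((α / 2) * R ^ (α - 2)) := by ring
          _ ≤ (-(c0 * R ^ (2 - α))) * ((α / 2) * R ^ (α - 2)) :=
              mul_le_mul_of_nonneg_right hN'le h13
          _ = (-(c0 * R ^ (2 - α))) * (α / 2) * R ^ (α - 2) := by ring
    _ = -κ := by
        rw [hκ_def]
        have : c0 * (R ^ (2 - α) * R ^ (α - 2)) = c0 := by rw [h12, mul_one]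
        nlinarith [this]
  -- ψ + κ t is antitone on [t₁, T')
  have hIcoSub1 : Ico t₁ T' ⊆ Ico t₀ T' := fun x hx => ⟨le_trans ht₁0.le hx.1, hx.2⟩
  have hΦanti : AntitoneOn (fun τ => ψ τ + κ * τ) (Ico t₁ T') := by
    refine antitoneOn_of_deriv_nonpos (convex_Ico _ _)
      ((hψ_cont.mono hIcoSub1).add (continuous_const.mul continuous_id).continuousOn) ?_ ?_
    · intro t ht
      rw [interior_Ico] at ht
      exact ((hψd t ht).1.add
        ((hasDerivAt_id t).const_mul κ)).differentiableAt.differentiableWithinAt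
    · intro t ht
      rw [interior_Ico] at ht
      obtain ⟨h1, h2⟩ := hψd t ht
      have h3 : HasDerivAt (fun τ => ψ τ + κ * τ) (deriv ψ t + κ * 1) t :=
        h1.add ((hasDerivAt_id t).const_mul κ)
      rw [h3.deriv]
      linarith
  -- the lower bound κ (T' - t) ≤ ‖y t‖ ^ α on [t₁, T')
  have hlow : ∀ t ∈ Ico t₁ T', κ * (T' - t) ≤ ‖y t‖ ^ α := by
    intro t ht
    rw [← hψ_eq t (hIcoSub1 ht)]
    have htend : Tendsto (fun s => κ * (s - t)) (𝓝[<] T') (𝓝 (κ * (T' - t))) := by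
      apply Tendsto.mono_left _ nhdsWithin_le_nhds
      exact (tendsto_id.sub_const t).const_mul κ
    refine le_of_tendsto htend ?_
    filter_upwards [Ioo_mem_nhdsLT ht.2] with s hs
    have hsI : s ∈ Ico t₁ T' := ⟨le_trans ht.1 hs.1.le, hs.2⟩
    have h4 := hΦanti ht hsI hs.1.le
    have h5 := hψ_nonneg s
    simp only at h4
    linarith
  -- integrability of the weight t ↦ ‖y t‖ ^ (δ' - α) on (t₀, T')
  have hρc : ContinuousOn (fun t => ‖y t‖ ^ (δ' - α)) (Ico t₀ T') :=
    hrc.rpow_const (fun t ht => Or.inl (hr t ht).ne')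
  have hρint : IntegrableOn (fun t => ‖y t‖ ^ (δ' - α)) (Ioo t₀ T') volume := by
    have hsplit : Ioo t₀ T' ⊆ Ioc t₀ t₁ ∪ Ioo t₁ T' := by
      intro x hx
      rcases le_or_gt x t₁ with h | h
      · exact Or.inl ⟨hx.1, h⟩
      · exact Or.inr ⟨h, hx.2⟩
    refine (IntegrableOn.union ?_ ?_).mono_set hsplit
    · have hIccsub : Icc t₀ t₁ ⊆ Ico t₀ T' := fun x hx => ⟨hx.1, lt_of_le_of_lt hx.2 ht₁T⟩
      exact ((hρc.mono hIccsub)).integrableOn_Icc.mono_set Ioc_subset_Icc_self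
    · set q : ℝ := (δ' - α) / α with hq_def
      have hq1 : -1 < q := by
        rw [hq_def, lt_div_iff₀ hα]
        linarith
      have hq0 : q ≤ 0 := by
        rw [hq_def]
        apply div_nonpos_of_nonpos_of_nonneg <;> linarith
      have hint1 : IntervalIntegrable (fun x : ℝ => x ^ q) volume 0 (T' - t₁) :=
        intervalIntegral.intervalIntegrable_rpow' hq1
      have hint2 := (hint1.comp_sub_left T').symm
      have hT0 : T' - 0 = T' := by ring
      have hT1 : T' - (T' - t₁) = t₁ := by ring
      rw [hT0, hT1] at hint2
      have hint3 : IntegrableOn (fun x : ℝ => (T' - x) ^ q) (Ioc t₁ T') volume :=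
        (intervalIntegrable_iff_integrableOn_Ioc_of_le ht₁T.le).mp hint2
      have hint4 : IntegrableOn (fun x : ℝ => κ ^ q * (T' - x) ^ q) (Ioo t₁ T') volume := by
        have h5 : IntegrableOn (fun x : ℝ => κ ^ q * (T' - x) ^ q) (Ioc t₁ T') volume :=
          hint3.const_mul _
        exact h5.mono_set Ioo_subset_Ioc_self
      refine Integrable.mono' hint4 ?_ ?_
      · have hIoosub1 : Ioo t₁ T' ⊆ Ico t₀ T' := fun x hx =>
          ⟨le_trans ht₁0.le hx.1.le, hx.2⟩
        exact (hρc.mono hIoosub1).aestronglyMeasurable measurableSet_Ioo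
      · filter_upwards [ae_restrict_mem measurableSet_Ioo] with t ht
        have htI : t ∈ Ico t₁ T' := ⟨ht.1.le, ht.2⟩
        have htI0 : t ∈ Ico t₀ T' := hIcoSub1 htI
        have h0 : (0:ℝ) < ‖y t‖ := hr t htI0
        have hTt : (0:ℝ) < T' - t := by linarith [ht.2]
        have h1 : (0:ℝ) < κ * (T' - t) := mul_pos hκ0 hTt
        have h2 : ‖y t‖ ^ (δ' - α) = (‖y t‖ ^ α) ^ q := by
          rw [← Real.rpow_mul (norm_nonneg _), hq_def]
          congr 1
          field_simp
        have h3 : (‖y t‖ ^ α) ^ q ≤ (κ * (T' - t)) ^ q :=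
          Real.rpow_le_rpow_of_nonpos h1 (hlow t htI) hq0
        have h4 : (κ * (T' - t)) ^ q = κ ^ q * (T' - t) ^ q :=
          Real.mul_rpow hκ0.le hTt.le
        rw [Real.norm_eq_abs, abs_of_nonneg (Real.rpow_nonneg (norm_nonneg _) _)]
        rw [h2, ← h4]
        exact h3
  -- bound |e| by the weight
  set Ce : ℝ := 2 * CA * M' with hCe_def
  have heb : ∀ t ∈ Ico t₀ T', |e t| ≤ Ce * ‖y t‖ ^ (δ' - α) := by
    intro t ht
    have h0 := hr t ht
    have h1 : |(inner ℝ (w t) (f t) : ℝ)| ≤ (2 * CA) * (M' * ‖y t‖ ^ (1 - α + δ')) := by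
      calc |(inner ℝ (w t) (f t) : ℝ)| ≤ ‖w t‖ * ‖f t‖ := abs_real_inner_le_norm _ _
      _ ≤ (2 * CA) * (M' * ‖y t‖ ^ (1 - α + δ')) :=
        mul_le_mul (hw_norm t ht) (hfb' t ht) (norm_nonneg _) (by positivity)
    have h2 : |e t| = |(inner ℝ (w t) (f t) : ℝ)| / ‖y t‖ := by
      rw [he_def]
      show |(inner ℝ (w t) (f t) : ℝ) / ‖y t‖| = _
      rw [abs_div, abs_of_pos h0]
    rw [h2]
    rw [div_le_iff₀ h0]
    calc |(inner ℝ (w t) (f t) : ℝ)| ≤ (2 * CA) * (M' * ‖y t‖ ^ (1 - α + δ')) := h1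
    _ = Ce * ‖y t‖ ^ (δ' - α) * ‖y t‖ := by
        rw [hCe_def, show (1 - α + δ' : ℝ) = (δ' - α) + 1 from by ring,
          Real.rpow_add h0, Real.rpow_one]
        ring
  have heint : IntegrableOn (fun t => |e t|) (Ioo t₀ T') volume := by
    refine Integrable.mono' (hρint.const_mul Ce) ?_ ?_
    · exact ((hec.mono Ioo_subset_Ico_self).abs).aestronglyMeasurable measurableSet_Ioo
    · filter_upwards [ae_restrict_mem measurableSet_Ioo] with t ht
      have htI : t ∈ Ico t₀ T' := ⟨ht.1.le, ht.2⟩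
      rw [Real.norm_eq_abs, abs_abs]
      exact heb t htI
  set Ie : ℝ := ∫ t in Ioo t₀ T', |e t| with hIe_def
  have hIe0 : 0 ≤ Ie := setIntegral_nonneg measurableSet_Ioo (fun t ht => abs_nonneg _)
  -- the main bound on integrals over compact subintervals
  have hIoosub : Ioo t₀ T' ⊆ Ico t₀ T' := Ioo_subset_Ico_self
  have hKbound : ∀ c d : ℝ, t₀ < c → c ≤ d → d < T' → (∫ t in Icc c d, g t) ≤ CA + Ie := by
    intro c d hc hcd hd
    have hIccsub : Icc c d ⊆ Ioo t₀ T' := fun x hx =>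
      ⟨lt_of_lt_of_le hc hx.1, lt_of_le_of_lt hx.2 hd⟩
    have huIcc : uIcc c d = Icc c d := uIcc_of_le hcd
    have hgi : IntervalIntegrable g volume c d := by
      apply ContinuousOn.intervalIntegrable
      rw [huIcc]
      exact hgc.mono (subset_trans hIccsub hIoosub)
    have hei : IntervalIntegrable e volume c d := by
      apply ContinuousOn.intervalIntegrable
      rw [huIcc]
      exact hec.mono (subset_trans hIccsub hIoosub)
    have hftc : ∫ t in c..d, (-2 * g t + 2 * e t) = lam d - lam c := by
      refine intervalIntegral.integral_eq_sub_of_hasDerivAt ?_ ?_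
      · intro t ht
        rw [huIcc] at ht
        exact hderiv t (hIccsub ht)
      · exact (hgi.const_mul (-2)).add (hei.const_mul 2)
    have h2 : ∫ t in c..d, (-2 * g t + 2 * e t)
        = -2 * (∫ t in c..d, g t) + 2 * ∫ t in c..d, e t := by
      rw [intervalIntegral.integral_add (hgi.const_mul (-2)) (hei.const_mul 2),
        intervalIntegral.integral_const_mul, intervalIntegral.integral_const_mul]
    have h3 : |∫ t in c..d, e t| ≤ Ie := by
      have h4 : |∫ t in c..d, e t| ≤ ∫ t in Ioc c d, |e t| := by
        rw [← intervalIntegral.integral_of_le (f := fun t => |e t|) hcd]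
        exact intervalIntegral.abs_integral_le_integral_abs hcd
      refine le_trans h4 ?_
      refine setIntegral_mono_set heint (Eventually.of_forall (fun t => abs_nonneg _)) ?_
      exact HasSubset.Subset.eventuallyLE (subset_trans Ioc_subset_Icc_self hIccsub)
    have hlamc' : lam c ≤ CA := hlam_ub c (hIoosub (hIccsub ⟨le_refl c, hcd⟩))
    have hlamd' : 0 < lam d := lt_of_lt_of_le hlmin
      (hlam_lb d (hIoosub (hIccsub ⟨hcd, le_refl d⟩)))
    have h5 : (∫ t in c..d, g t) = (lam c - lam d) / 2 + ∫ t in c..d, e t := by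
      rw [hftc] at h2
      linarith
    have h6 : (∫ t in Icc c d, g t) = ∫ t in c..d, g t := by
      rw [integral_Icc_eq_integral_Ioc, intervalIntegral.integral_of_le hcd]
    rw [h6, h5]
    have h7 : (∫ t in c..d, e t) ≤ Ie := le_trans (le_abs_self _) h3
    linarith
  exact aux_integrableOn_of_bound g t₀ T' (CA + Ie) hT' (hgc.mono hIoosub)
    (fun t ht => hg_nn t (hIoosub ht)) hKbound
end
end
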